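/- Let φ : ℝ×ℝ² → ℂ be a Schwartz function with φ(t,ξ) = 0 whenever t < 0. Then the backprojection (x₁₂,x₃) ↦ (R*φ)(x₁₂,x₃) = (1/(4π)) ∫_{ℝ²} φ(√(‖x₁₂−ξ‖² + x₃²), ξ) · (√(‖x₁₂−ξ‖² + x₃²))^{−1} dξ is a Schwartz function on ℝ²×ℝ. -/

import Mathlib

open MeasureTheory Real Complex

/-- Backprojection operator:
`(R*φ)(x₁₂,x₃) = (1/(4π)) ∫_{ℝ²} φ(√(‖x₁₂−ξ‖² + x₃²), ξ)·(√(‖x₁₂−ξ‖² + x₃²))⁻¹ dξ`. -/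
noncomputable def Rstar (g : ℝ × EuclideanSpace ℝ (Fin 2) → ℂ)
    (x : EuclideanSpace ℝ (Fin 2) × ℝ) : ℂ :=
  ((1 / (4 * π) : ℝ) : ℂ) * ∫ ξ : EuclideanSpace ℝ (Fin 2),
    g (Real.sqrt (‖x.1 - ξ‖ ^ 2 + x.2 ^ 2), ξ) /
      ((Real.sqrt (‖x.1 - ξ‖ ^ 2 + x.2 ^ 2) : ℝ) : ℂ)

open MeasureTheory Real Complex SchwartzMap
open scoped ContDiff
set_option linter.unusedSectionVars false

noncomputable section

namespace RstarAux

universe uE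

variable {E : Type uE} [NormedAddCommGroup E] [NormedSpace ℝ E]
variable {V : Type*} [NormedAddCommGroup V] [NormedSpace ℝ V]
variable {W : Type*} [NormedAddCommGroup W] [NormedSpace ℝ W]

/-- vanishing for negative first coordinate -/
def Van (f : ℝ × E → V) : Prop := ∀ p : ℝ × E, p.1 < 0 → f p = 0

lemma Van.closure {f : ℝ × E → V} (hc : Continuous f) (hf : Van f) :
    ∀ p : ℝ × E, p.1 ≤ 0 → f p = 0 := by
  intro p hp
  rcases lt_or_eq_of_le hp with h | h
  · exact hf p h
  have h1 : Filter.Tendsto (fun n : ℕ => ((p.1 - 1/(n+1) : ℝ), p.2)) Filter.atTop (nhds p) := by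
    have : Filter.Tendsto (fun n : ℕ => (p.1 - 1/(n+1) : ℝ)) Filter.atTop (nhds p.1) := by
      have := tendsto_one_div_add_atTop_nhds_zero_nat (𝕜 := ℝ)
      have h2 := Filter.Tendsto.const_sub p.1 this
      simpa using h2
    exact this.prodMk_nhds tendsto_const_nhds
  have h2 : Filter.Tendsto (fun n : ℕ => f ((p.1 - 1/(n+1) : ℝ), p.2)) Filter.atTop (nhds (f p)) :=
    (hc.tendsto p).comp h1
  have h3 : (fun n : ℕ => f ((p.1 - 1/(n+1) : ℝ), p.2)) = fun _ => 0 := by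
    funext n
    apply hf
    have : (0:ℝ) < 1/(n+1) := by positivity
    simp only []
    rw [← h]
    linarith
  rw [h3] at h2
  exact tendsto_nhds_unique h2 tendsto_const_nhds

lemma Van.vfderiv {f : ℝ × E → V} (hf : Van f) : Van (_root_.fderiv ℝ f) := by
  intro p hp
  have hop : IsOpen {q : ℝ × E | q.1 < 0} := isOpen_lt continuous_fst continuous_const
  have hev : f =ᶠ[nhds p] (fun _ => 0) :=
    Filter.eventuallyEq_of_mem (hop.mem_nhds hp) (fun q hq => hf q hq)
  rw [hev.fderiv_eq]
  simp

lemma Van.fderiv_closure {f : ℝ × E → V} (hsm : ContDiff ℝ ∞ f) (hf : Van f) :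
    ∀ p : ℝ × E, p.1 ≤ 0 → _root_.fderiv ℝ f p = 0 :=
  Van.closure (hsm.continuous_fderiv (by simp)) hf.vfderiv

variable {D : Type*} [NormedAddCommGroup D] [NormedSpace ℝ D]

/-- Postcomposition of a Schwartz map with a fixed continuous linear map. -/
def postcomp (u : V →L[ℝ] W) (f : 𝓢(D, V)) : 𝓢(D, W) where
  toFun := fun x => u (f x)
  smooth' := u.contDiff.comp f.smooth'
  decay' := by
    intro k n
    obtain ⟨C, hC⟩ := f.decay' k n
    refine ⟨‖u‖ * C, fun x => ?_⟩
    have h1 : iteratedFDeriv ℝ n (fun x => u (f x)) x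
        = u.compContinuousMultilinearMap (iteratedFDeriv ℝ n (⇑f) x) :=
      u.iteratedFDeriv_comp_left f.smooth'.contDiffAt (by exact_mod_cast le_top)
    rw [h1]
    calc ‖x‖ ^ k * ‖u.compContinuousMultilinearMap (iteratedFDeriv ℝ n (⇑f) x)‖
        ≤ ‖x‖ ^ k * (‖u‖ * ‖iteratedFDeriv ℝ n (⇑f) x‖) := by
          have h2 := u.norm_compContinuousMultilinearMap_le (iteratedFDeriv ℝ n (⇑f) x)
          have h3 : (0:ℝ) ≤ ‖x‖ ^ k := by positivity
          exact mul_le_mul_of_nonneg_left h2 h3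
      _ = ‖u‖ * (‖x‖ ^ k * ‖iteratedFDeriv ℝ n (⇑f) x‖) := by ring
      _ ≤ ‖u‖ * C := mul_le_mul_of_nonneg_left (hC x) (norm_nonneg u)

@[simp] lemma postcomp_apply (u : V →L[ℝ] W) (f : 𝓢(D, V)) (x : D) :
    postcomp u f x = u (f x) := rfl

/-- partial derivative in direction `m` (replacement for the removed Mathlib definition). -/
def pderivCLM (_𝕜 : Type) (m : D) : 𝓢(D, V) →L[ℝ] 𝓢(D, V) :=
  SchwartzMap.evalCLM ℝ D V m ∘L fderivCLM ℝ D V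

lemma pderivCLM_apply (_𝕜 : Type) (m : D) (f : 𝓢(D, V)) (x : D) :
    pderivCLM _𝕜 m f x = fderiv ℝ f x m := rfl


lemma van_pderiv (f : 𝓢(ℝ × E, V)) (hf : Van ⇑f) :
    Van ⇑(pderivCLM ℝ ((1,0) : ℝ × E) f) := by
  intro p hp
  rw [pderivCLM_apply, hf.vfderiv p hp]
  rfl

lemma norm_le_norm_prod_right (t : ℝ) (ξ : E) : ‖ξ‖ ≤ ‖((t, ξ) : ℝ × E)‖ :=
  le_max_right _ _

lemma norm_le_norm_prod_left (t : ℝ) (ξ : E) : |t| ≤ ‖((t, ξ) : ℝ × E)‖ :=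
  le_max_left _ _

/-- Quantitative flatness: a Schwartz function vanishing for `t < 0` vanishes to
infinite order at `t = 0`, with uniform weighted bounds. -/
lemma flat (f : 𝓢(ℝ × E, V)) (hf : Van ⇑f) (k m : ℕ) :
    ∃ C : ℝ, 0 ≤ C ∧ ∀ (t : ℝ) (ξ : E), 0 ≤ t → t ≤ 1 →
      (1 + ‖((t, ξ) : ℝ × E)‖) ^ m * ‖f (t, ξ)‖ ≤ C * t ^ k := by
  induction k generalizing f with
  | zero =>
    refine ⟨2 ^ m * (Finset.Iic ((m : ℕ), (0 : ℕ))).sup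
      (fun mm => SchwartzMap.seminorm ℝ mm.1 mm.2) f, by positivity, ?_⟩
    intro t ξ _ _
    have h := one_add_le_sup_seminorm_apply (𝕜 := ℝ) (m := (m, 0)) (k := m) (n := 0)
      le_rfl le_rfl f (t, ξ)
    rw [norm_iteratedFDeriv_zero] at h
    simpa using h
  | succ k IH =>
    obtain ⟨C, hC0, hC⟩ := IH (pderivCLM ℝ ((1,0) : ℝ × E) f) (van_pderiv f hf)
    refine ⟨2 ^ m * C, by positivity, ?_⟩
    intro t ξ ht0 ht1
    set x : ℝ × E := (t, ξ) with hx
    have hpos : (0:ℝ) < (1 + ‖x‖) ^ m := by positivity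
    rw [← le_div_iff₀' hpos]
    -- MVT on g s := f (s, ξ) over [0, t]
    set B : ℝ := 2 ^ m * C * t ^ k / (1 + ‖x‖) ^ m with hB
    have key : ∀ s ∈ Set.Icc (0:ℝ) t,
        HasDerivWithinAt (fun s : ℝ => f (s, ξ))
          ((pderivCLM ℝ ((1,0) : ℝ × E) f) (s, ξ)) (Set.Icc 0 t) s := by
      intro s _
      have h1 : HasDerivAt (fun s : ℝ => ((s, ξ) : ℝ × E)) ((1 : ℝ), (0 : E)) s :=
        (hasDerivAt_id s).prodMk (hasDerivAt_const s ξ)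
      have h2 : HasFDerivAt (⇑f) (fderiv ℝ (⇑f) (s, ξ)) (s, ξ) :=
        f.differentiableAt.hasFDerivAt
      have h3 := h2.comp_hasDerivAt s h1
      rw [pderivCLM_apply]
      exact h3.hasDerivWithinAt
    have bound : ∀ s ∈ Set.Ico (0:ℝ) t,
        ‖(pderivCLM ℝ ((1,0) : ℝ × E) f) (s, ξ)‖ ≤ B := by
      intro s hs
      have hs1 : s ≤ 1 := le_trans (le_of_lt hs.2) ht1
      have h4 := hC s ξ hs.1 hs1
      have h5 : ‖(pderivCLM ℝ ((1,0) : ℝ × E) f) (s, ξ)‖ * (1 + ‖((s, ξ) : ℝ × E)‖) ^ m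
          ≤ C * t ^ k := by
        have hsk : s ^ k ≤ t ^ k := pow_le_pow_left₀ hs.1 (le_of_lt hs.2) k
        calc ‖(pderivCLM ℝ ((1,0) : ℝ × E) f) (s, ξ)‖ * (1 + ‖((s, ξ) : ℝ × E)‖) ^ m
            = (1 + ‖((s, ξ) : ℝ × E)‖) ^ m * ‖(pderivCLM ℝ ((1,0) : ℝ × E) f) (s, ξ)‖ := by ring
          _ ≤ C * s ^ k := h4
          _ ≤ C * t ^ k := by exact mul_le_mul_of_nonneg_left hsk hC0
      have h6 : (1 + ‖x‖) ≤ 2 * (1 + ‖((s, ξ) : ℝ × E)‖) := by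
        have : ‖x‖ ≤ 1 + ‖ξ‖ := by
          rw [hx]
          refine max_le ?_ ?_
          · rw [Real.norm_eq_abs, _root_.abs_of_nonneg ht0]
            linarith [norm_nonneg ξ]
          · linarith [norm_nonneg ξ]
        have h7 : ‖ξ‖ ≤ ‖((s, ξ) : ℝ × E)‖ := norm_le_norm_prod_right s ξ
        linarith [norm_nonneg (((s, ξ) : ℝ × E))]
      have h8 : (1 + ‖x‖) ^ m ≤ 2 ^ m * (1 + ‖((s, ξ) : ℝ × E)‖) ^ m := by
        calc (1 + ‖x‖) ^ m ≤ (2 * (1 + ‖((s, ξ) : ℝ × E)‖)) ^ m :=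
              pow_le_pow_left₀ (by positivity) h6 m
          _ = 2 ^ m * (1 + ‖((s, ξ) : ℝ × E)‖) ^ m := mul_pow _ _ _
      rw [hB, le_div_iff₀ hpos]
      calc ‖(pderivCLM ℝ ((1,0) : ℝ × E) f) (s, ξ)‖ * (1 + ‖x‖) ^ m
          ≤ ‖(pderivCLM ℝ ((1,0) : ℝ × E) f) (s, ξ)‖ *
            (2 ^ m * (1 + ‖((s, ξ) : ℝ × E)‖) ^ m) :=
            mul_le_mul_of_nonneg_left h8 (norm_nonneg _)
        _ = 2 ^ m * (‖(pderivCLM ℝ ((1,0) : ℝ × E) f) (s, ξ)‖ *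
            (1 + ‖((s, ξ) : ℝ × E)‖) ^ m) := by ring
        _ ≤ 2 ^ m * (C * t ^ k) := by
            refine mul_le_mul_of_nonneg_left h5 (by positivity)
        _ = 2 ^ m * C * t ^ k := by ring
    have h9 := norm_image_sub_le_of_norm_deriv_le_segment' key bound t
      (Set.right_mem_Icc.mpr ht0)
    have h10 : f ((0 : ℝ), ξ) = 0 := hf.closure f.continuous (0, ξ) le_rfl
    rw [h10, sub_zero, sub_zero] at h9
    calc ‖f (t, ξ)‖ ≤ B * t := h9
      _ = 2 ^ m * C * t ^ (k+1) / (1 + ‖x‖) ^ m := by rw [hB]; field_simp; ring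

variable (E V) in
/-- `B1 v = (dt,dξ) ↦ dt • v`. -/
def B1 : V →L[ℝ] ((ℝ × E) →L[ℝ] V) :=
  ContinuousLinearMap.smulRightL ℝ (ℝ × E) V (ContinuousLinearMap.fst ℝ ℝ E)

@[simp] lemma B1_apply (v : V) (w : ℝ × E) : B1 E V v w = w.1 • v := rfl

variable (E) in
def P2 : (ℝ × E) →L[ℝ] (ℝ × E) :=
  (ContinuousLinearMap.inr ℝ ℝ E).comp (ContinuousLinearMap.snd ℝ ℝ E)

variable (E V) in
/-- `B2 M = (dt,dξ) ↦ M (0, dξ)`. -/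
def B2 : ((ℝ × E) →L[ℝ] V) →L[ℝ] ((ℝ × E) →L[ℝ] V) :=
  (ContinuousLinearMap.compL ℝ (ℝ × E) (ℝ × E) V).flip (P2 E)

@[simp] lemma B2_apply (M : (ℝ × E) →L[ℝ] V) (w : ℝ × E) : B2 E V M w = M (0, w.2) := rfl

/-- `t ↦ t⁻¹ ^ j • f t`, using `(0 : ℝ)⁻¹ = 0` junk value. -/
def Qfun (j : ℕ) (f : ℝ × E → V) : ℝ × E → V := fun p => (p.1⁻¹) ^ j • f p

/-- Formal derivative of `Qfun j f`. -/
def QD (j : ℕ) (f : 𝓢(ℝ × E, V)) : ℝ × E → ((ℝ × E) →L[ℝ] V) :=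
  Qfun (j+1) ⇑(postcomp (B1 E V) ((-(j:ℝ)) • f)) +
  Qfun j ⇑(postcomp (B1 E V) (pderivCLM ℝ ((1,0) : ℝ × E) f)) +
  Qfun j ⇑(postcomp (B2 E V) (fderivCLM ℝ _ _ f))

lemma QD_apply (j : ℕ) (f : 𝓢(ℝ × E, V)) (p : ℝ × E) (v : ℝ × E) :
    QD j f p v = (-(j:ℝ) * (p.1⁻¹) ^ (j+1) * v.1) • f p
      + ((p.1⁻¹) ^ j * v.1) • (pderivCLM ℝ ((1,0) : ℝ × E) f) p
      + (p.1⁻¹) ^ j • (fderiv ℝ (⇑f) p (0, v.2)) := by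
  simp only [QD, Qfun, Pi.add_apply, postcomp_apply, ContinuousLinearMap.add_apply,
    ContinuousLinearMap.coe_smul', Pi.smul_apply, B1_apply, B2_apply, SchwartzMap.smul_apply,
    fderivCLM_apply, smul_smul]
  match_scalars <;> ring

lemma fderiv_decomp (f : 𝓢(ℝ × E, V)) (p : ℝ × E) (v : ℝ × E) :
    fderiv ℝ (⇑f) p v = v.1 • (pderivCLM ℝ ((1,0) : ℝ × E) f) p + fderiv ℝ (⇑f) p (0, v.2) := by
  have hv : v = v.1 • ((1:ℝ), (0:E)) + ((0:ℝ), v.2) := by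
    refine Prod.ext ?_ ?_ <;> simp
  conv_lhs => rw [hv]
  rw [ContinuousLinearMap.map_add, ContinuousLinearMap.map_smul, pderivCLM_apply]

lemma Qfun_hasFDerivAt (f : 𝓢(ℝ × E, V)) (hf : Van ⇑f) (j : ℕ) (p : ℝ × E) :
    HasFDerivAt (Qfun j ⇑f) (QD j f p) p := by
  cases j with
  | zero =>
    have e1 : Qfun 0 ⇑f = ⇑f := by funext q; simp [Qfun]
    have e2 : QD 0 f p = fderiv ℝ (⇑f) p := by
      refine ContinuousLinearMap.ext fun v => ?_
      rw [QD_apply, fderiv_decomp f p v]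
      simp
    rw [e1, e2]
    exact f.differentiableAt.hasFDerivAt
  | succ m =>
    rcases lt_trichotomy p.1 0 with hp | hp | hp
    · -- negative: locally zero
      have hop : IsOpen {q : ℝ × E | q.1 < 0} := isOpen_lt continuous_fst continuous_const
      have hev : Qfun (m+1) ⇑f =ᶠ[nhds p] (fun _ => (0:V)) := by
        refine Filter.eventuallyEq_of_mem (hop.mem_nhds hp) (fun q hq => ?_)
        simp [Qfun, hf q hq]
      have hzero : QD (m+1) f p = 0 := by
        refine ContinuousLinearMap.ext fun v => ?_
        rw [QD_apply, hf p hp, van_pderiv f hf p hp, hf.vfderiv p hp]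
        simp
      rw [hzero]
      exact (hasFDerivAt_const (0:V) p).congr_of_eventuallyEq hev
    · -- zero point
      have hQD0 : QD (m+1) f p = 0 := by
        refine ContinuousLinearMap.ext fun v => ?_
        rw [QD_apply, hp]
        simp
      rw [hQD0, hasFDerivAt_iff_isLittleO_nhds_zero]
      have hQp : Qfun (m+1) ⇑f p = 0 := by simp [Qfun, hp]
      rw [Asymptotics.isLittleO_iff]
      intro ε hε
      obtain ⟨C, hC0, hC⟩ := flat f hf (m+3) 0
      filter_upwards [Metric.ball_mem_nhds (0 : ℝ × E)
        (show (0:ℝ) < min 1 (ε/(C+1)) by positivity)] with h hh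
      rw [mem_ball_zero_iff] at hh
      rw [hQp]
      simp only [ContinuousLinearMap.zero_apply, sub_zero]
      have hεh : (0:ℝ) ≤ ε * ‖h‖ := by positivity
      have hph1 : (p + h).1 = h.1 := by simp [hp]
      rcases lt_trichotomy (p + h).1 0 with ht | ht | ht
      · rw [show Qfun (m+1) (⇑f) (p+h) = 0 by simp [Qfun, hf (p+h) ht]]
        simpa using hεh
      · rw [show Qfun (m+1) (⇑f) (p+h) = 0 by simp [Qfun, ht]]
        simpa using hεh
      · -- positive case
        have ht1 : (p+h).1 ≤ ‖h‖ := by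
          rw [hph1] at ht ⊢
          exact le_trans (le_abs_self _) (norm_le_norm_prod_left h.1 h.2)
        have hh1 : ‖h‖ < 1 := lt_of_lt_of_le hh (min_le_left _ _)
        have hh2 : ‖h‖ < ε/(C+1) := lt_of_lt_of_le hh (min_le_right _ _)
        have hc := hC (p+h).1 (p+h).2 (le_of_lt ht) (le_trans ht1 (le_of_lt hh1))
        rw [pow_zero, one_mul, Prod.mk.eta] at hc
        have hnorm : ‖Qfun (m+1) (⇑f) (p+h)‖ = ((p+h).1⁻¹) ^ (m+1) * ‖f (p+h)‖ := by
          rw [Qfun, norm_smul, Real.norm_eq_abs, _root_.abs_of_nonneg (by positivity)]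
        have hb : ‖Qfun (m+1) (⇑f) (p+h)‖ ≤ C * (p+h).1 ^ 2 := by
          rw [hnorm]
          have h2 : ((p+h).1⁻¹) ^ (m+1) * ‖f (p+h)‖
              ≤ ((p+h).1⁻¹) ^ (m+1) * (C * (p+h).1 ^ (m+3)) :=
            mul_le_mul_of_nonneg_left hc (by positivity)
          refine le_trans h2 (le_of_eq ?_)
          rw [show m + 3 = (m+1) + 2 by ring, pow_add, inv_pow]
          field_simp
          ring
        have hfin : C * (p+h).1 ^ 2 ≤ ε * ‖h‖ := by
          have e1 : (p+h).1 ^ 2 ≤ ‖h‖ * ‖h‖ := by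
            rw [sq]
            exact mul_le_mul ht1 ht1 (le_of_lt ht) (norm_nonneg h)
          calc C * (p+h).1 ^ 2 ≤ C * (‖h‖ * ‖h‖) :=
                mul_le_mul_of_nonneg_left e1 hC0
            _ ≤ C * ((ε/(C+1)) * ‖h‖) := by
                refine mul_le_mul_of_nonneg_left ?_ hC0
                exact mul_le_mul_of_nonneg_right (le_of_lt hh2) (norm_nonneg h)
            _ = (C/(C+1)) * ε * ‖h‖ := by ring
            _ ≤ 1 * ε * ‖h‖ := by
                have : C/(C+1) ≤ 1 := by
                  rw [div_le_one (by linarith)]; linarith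
                exact mul_le_mul_of_nonneg_right
                  (mul_le_mul_of_nonneg_right this (le_of_lt hε)) (norm_nonneg h)
            _ = ε * ‖h‖ := by ring
        exact le_trans hb hfin
    · -- positive: product/chain rule
      have hne : p.1 ≠ 0 := ne_of_gt hp
      have h1 : HasDerivAt (fun t : ℝ => (t⁻¹) ^ (m+1))
          ((((m:ℝ)+1)) * (p.1⁻¹) ^ m * (-(p.1 ^ 2)⁻¹)) p.1 := by
        have := (hasDerivAt_inv hne).pow (m+1)
        rw [Nat.add_sub_cancel, Nat.cast_add, Nat.cast_one] at this
        exact this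
      have h2 : HasFDerivAt (fun q : ℝ × E => (q.1⁻¹) ^ (m+1))
          (((((m:ℝ)+1)) * (p.1⁻¹) ^ m * (-(p.1 ^ 2)⁻¹)) • ContinuousLinearMap.fst ℝ ℝ E) p :=
        h1.comp_hasFDerivAt p hasFDerivAt_fst
      have h3 := h2.smul f.differentiableAt.hasFDerivAt
      have h4 : (fun q : ℝ × E => (q.1⁻¹) ^ (m+1)) • ⇑f = Qfun (m+1) ⇑f := rfl
      rw [h4] at h3
      refine h3.congr_fderiv (Eq.symm ?_)
      refine ContinuousLinearMap.ext fun v => ?_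
      rw [QD_apply]
      simp only [ContinuousLinearMap.add_apply, ContinuousLinearMap.coe_smul', Pi.smul_apply,
        ContinuousLinearMap.smulRight_apply, ContinuousLinearMap.coe_fst']
      rw [fderiv_decomp f p v]
      have hinv : (p.1 ^ 2)⁻¹ = p.1⁻¹ ^ 2 := by rw [inv_pow]
      rw [hinv]
      match_scalars <;> (try simp only [smul_eq_mul]) <;> ring

lemma van_smul (c : ℝ) {f : 𝓢(ℝ × E, V)} (hf : Van ⇑f) : Van ⇑(c • f) := by
  intro p hp
  rw [SchwartzMap.smul_apply, hf p hp, smul_zero]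

lemma van_postcomp (u : V →L[ℝ] W) {f : 𝓢(ℝ × E, V)} (hf : Van ⇑f) :
    Van ⇑(postcomp u f) := by
  intro p hp
  rw [postcomp_apply, hf p hp, map_zero]

lemma van_fderivCLM {f : 𝓢(ℝ × E, V)} (hf : Van ⇑f) : Van ⇑(fderivCLM ℝ _ _ f) := by
  intro p hp
  rw [fderivCLM_apply]
  exact hf.vfderiv p hp

lemma Qfun_contDiff (n : ℕ) :
    ∀ {V : Type uE} [NormedAddCommGroup V] [NormedSpace ℝ V],
    ∀ (f : 𝓢(ℝ × E, V)), Van ⇑f → ∀ (j : ℕ), ContDiff ℝ n (Qfun j (⇑f)) := by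
  induction n with
  | zero =>
    intro V _ _ f hf j
    rw [show ((0:ℕ) : WithTop ℕ∞) = 0 by norm_cast, contDiff_zero]
    cases j with
    | zero =>
      have h : Qfun 0 ⇑f = ⇑f := funext fun q => by simp [Qfun]
      rw [h]; exact f.continuous
    | succ m =>
      rw [continuous_iff_continuousAt]
      intro p
      rcases eq_or_ne p.1 0 with hp | hp
      · obtain ⟨C, hC0, hC⟩ := flat f hf (m+2) 0
        have hQp : Qfun (m+1) ⇑f p = 0 := by simp [Qfun, hp]
        have key : Filter.Tendsto (Qfun (m+1) ⇑f) (nhds p) (nhds 0) := by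
          have hbound : ∀ᶠ q in nhds p, ‖Qfun (m+1) (⇑f) q‖ ≤ (fun q : ℝ × E => C * |q.1|) q := by
            filter_upwards [Metric.ball_mem_nhds p one_pos] with q hq
            have hq1 : |q.1| < 1 := by
              rw [mem_ball_iff_norm] at hq
              have := norm_le_norm_prod_left (q - p).1 (q - p).2
              simp only [Prod.fst_sub] at this
              calc |q.1| = |q.1 - p.1| := by rw [hp, sub_zero]
                _ ≤ ‖q - p‖ := le_trans this (le_of_eq rfl)
                _ < 1 := hq
            rcases lt_trichotomy q.1 0 with h | h | h
            · rw [show Qfun (m+1) (⇑f) q = 0 by simp [Qfun, hf q h]]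
              simp only [norm_zero]
              positivity
            · rw [show Qfun (m+1) (⇑f) q = 0 by simp [Qfun, h]]
              simp only [norm_zero]
              positivity
            · have hc := hC q.1 q.2 (le_of_lt h) (le_of_lt (lt_of_le_of_lt (le_abs_self _) hq1))
              rw [pow_zero, one_mul, Prod.mk.eta] at hc
              have heq : ‖Qfun (m+1) (⇑f) q‖ = (q.1⁻¹) ^ (m+1) * ‖f q‖ := by
                rw [Qfun, norm_smul, Real.norm_eq_abs, _root_.abs_of_nonneg (by positivity)]
              rw [heq]
              calc (q.1⁻¹) ^ (m+1) * ‖f q‖ ≤ (q.1⁻¹) ^ (m+1) * (C * q.1 ^ (m+2)) :=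
                    mul_le_mul_of_nonneg_left hc (by positivity)
                _ = C * q.1 := by
                    rw [show m + 2 = (m+1) + 1 by ring, pow_add, inv_pow]
                    field_simp
                    ring
                _ ≤ C * |q.1| := mul_le_mul_of_nonneg_left (le_abs_self _) hC0
          have hg : Filter.Tendsto (fun q : ℝ × E => C * |q.1|) (nhds p) (nhds 0) := by
            have hcont : Continuous (fun q : ℝ × E => C * |q.1|) :=
              (continuous_const.mul (continuous_fst.abs))
            have h0 := hcont.tendsto p
            rw [hp] at h0
            simpa using h0
          exact squeeze_zero_norm' hbound hg
        have : ContinuousAt (Qfun (m+1) ⇑f) p := by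
          unfold ContinuousAt
          rw [hQp]
          exact key
        exact this
      · have hc : ContinuousAt (fun q : ℝ × E => (q.1⁻¹) ^ (m+1)) p :=
          ((continuousAt_fst.inv₀ hp).pow (m+1))
        exact hc.smul f.continuous.continuousAt
  | succ n IH =>
    intro V _ _ f hf j
    have hdiff : Differentiable ℝ (Qfun j ⇑f) :=
      fun p => (Qfun_hasFDerivAt f hf j p).differentiableAt
    have hfd : fderiv ℝ (Qfun j ⇑f) = QD j f :=
      funext fun p => (Qfun_hasFDerivAt f hf j p).fderiv
    have hcast : ((n + 1 : ℕ) : WithTop ℕ∞) = (n : WithTop ℕ∞) + 1 := by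
      norm_cast
    rw [hcast, contDiff_succ_iff_fderiv]
    refine ⟨hdiff, ?_, ?_⟩
    · intro hω
      exfalso
      exact (by simp : ((n : WithTop ℕ∞) ≠ ⊤)) hω
    · rw [hfd]
      unfold QD
      refine ContDiff.add (ContDiff.add ?_ ?_) ?_
      · exact IH (postcomp (B1 E V) ((-(j:ℝ)) • f)) (van_postcomp _ (van_smul _ hf)) (j+1)
      · exact IH (postcomp (B1 E V) (pderivCLM ℝ ((1,0) : ℝ × E) f))
          (van_postcomp _ (van_pderiv f hf)) j
      · exact IH (postcomp (B2 E V) (fderivCLM ℝ _ _ f)) (van_postcomp _ (van_fderivCLM hf)) j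

lemma Qfun_decay (n : ℕ) :
    ∀ {V : Type uE} [NormedAddCommGroup V] [NormedSpace ℝ V],
    ∀ (f : 𝓢(ℝ × E, V)), Van ⇑f → ∀ (j k : ℕ),
      ∃ C : ℝ, 0 ≤ C ∧ ∀ x : ℝ × E, ‖x‖ ^ k * ‖iteratedFDeriv ℝ n (Qfun j (⇑f)) x‖ ≤ C := by
  induction n with
  | zero =>
    intro V _ _ f hf j k
    obtain ⟨C1, hC10, hC1⟩ := flat f hf j k
    set C2 := 2 ^ k * (Finset.Iic ((k:ℕ),(0:ℕ))).sup
        (schwartzSeminormFamily ℝ (ℝ × E) V) f with hC2def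
    have hC20 : (0:ℝ) ≤ C2 := by positivity
    refine ⟨C1 + C2, by positivity, fun x => ?_⟩
    rw [norm_iteratedFDeriv_zero]
    have hsem : (1 + ‖x‖) ^ k * ‖f x‖ ≤ C2 := by
      have h := one_add_le_sup_seminorm_apply (𝕜 := ℝ) (m := ((k:ℕ), (0:ℕ))) le_rfl le_rfl f x
      rw [norm_iteratedFDeriv_zero] at h
      exact h
    have hxk : ‖x‖ ^ k ≤ (1 + ‖x‖) ^ k :=
      pow_le_pow_left₀ (norm_nonneg x) (by linarith [norm_nonneg x]) k
    have hQnorm : ‖Qfun j (⇑f) x‖ = |x.1⁻¹| ^ j * ‖f x‖ := by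
      rw [Qfun, norm_smul, norm_pow, Real.norm_eq_abs]
    rcases lt_trichotomy x.1 0 with hx | hx | hx
    · rw [show Qfun j (⇑f) x = 0 by simp [Qfun, hf x hx]]
      simp only [norm_zero, mul_zero]
      positivity
    · cases j with
      | zero =>
        rw [hQnorm, pow_zero, one_mul]
        calc ‖x‖ ^ k * ‖f x‖ ≤ (1 + ‖x‖) ^ k * ‖f x‖ :=
              mul_le_mul_of_nonneg_right hxk (norm_nonneg _)
          _ ≤ C2 := hsem
          _ ≤ C1 + C2 := by linarith
      | succ m =>
        rw [show Qfun (m+1) (⇑f) x = 0 by simp [Qfun, hx]]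
        simp only [norm_zero, mul_zero]
        positivity
    · rcases le_or_gt x.1 1 with hx1 | hx1
      · have hc := hC1 x.1 x.2 (le_of_lt hx) hx1
        rw [Prod.mk.eta] at hc
        rw [hQnorm, _root_.abs_of_nonneg (le_of_lt (inv_pos.mpr hx))]
        calc ‖x‖ ^ k * ((x.1⁻¹) ^ j * ‖f x‖)
            = (x.1⁻¹) ^ j * (‖x‖ ^ k * ‖f x‖) := by ring
          _ ≤ (x.1⁻¹) ^ j * ((1 + ‖x‖) ^ k * ‖f x‖) := by
              refine mul_le_mul_of_nonneg_left ?_ (by positivity)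
              exact mul_le_mul_of_nonneg_right hxk (norm_nonneg _)
          _ ≤ (x.1⁻¹) ^ j * (C1 * x.1 ^ j) := mul_le_mul_of_nonneg_left hc (by positivity)
          _ = C1 := by
              rw [inv_pow]
              field_simp
          _ ≤ C1 + C2 := by linarith
      · have hinv : |x.1⁻¹| ^ j ≤ 1 := by
          refine pow_le_one₀ (abs_nonneg _) ?_
          rw [abs_of_pos (inv_pos.mpr (by linarith))]
          exact inv_le_one_of_one_le₀ (le_of_lt hx1)
        rw [hQnorm]
        calc ‖x‖ ^ k * (|x.1⁻¹| ^ j * ‖f x‖)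
            ≤ ‖x‖ ^ k * (1 * ‖f x‖) := by
              refine mul_le_mul_of_nonneg_left ?_ (by positivity)
              exact mul_le_mul_of_nonneg_right hinv (norm_nonneg _)
          _ = ‖x‖ ^ k * ‖f x‖ := by ring
          _ ≤ (1 + ‖x‖) ^ k * ‖f x‖ := mul_le_mul_of_nonneg_right hxk (norm_nonneg _)
          _ ≤ C2 := hsem
          _ ≤ C1 + C2 := by linarith
  | succ n IH =>
    intro V _ _ f hf j k
    obtain ⟨Ca, hCa0, hCa⟩ := IH (postcomp (B1 E V) ((-(j:ℝ)) • f))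
      (van_postcomp _ (van_smul _ hf)) (j+1) k
    obtain ⟨Cb, hCb0, hCb⟩ := IH (postcomp (B1 E V) (pderivCLM ℝ ((1,0) : ℝ × E) f))
      (van_postcomp _ (van_pderiv f hf)) j k
    obtain ⟨Cc, hCc0, hCc⟩ := IH (postcomp (B2 E V) (fderivCLM ℝ _ _ f))
      (van_postcomp _ (van_fderivCLM hf)) j k
    refine ⟨Ca + Cb + Cc, by positivity, fun x => ?_⟩
    rw [← norm_iteratedFDeriv_fderiv]
    have hfd : fderiv ℝ (Qfun j ⇑f) = QD j f :=
      funext fun p => (Qfun_hasFDerivAt f hf j p).fderiv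
    rw [hfd]
    have h1 := Qfun_contDiff (E := E) n (postcomp (B1 E V) ((-(j:ℝ)) • f))
      (van_postcomp _ (van_smul _ hf)) (j+1)
    have h2 := Qfun_contDiff (E := E) n (postcomp (B1 E V) (pderivCLM ℝ ((1,0) : ℝ × E) f))
      (van_postcomp _ (van_pderiv f hf)) j
    have h3 := Qfun_contDiff (E := E) n (postcomp (B2 E V) (fderivCLM ℝ _ _ f))
      (van_postcomp _ (van_fderivCLM hf)) j
    have hadd : iteratedFDeriv ℝ n (QD j f) x
        = iteratedFDeriv ℝ n (Qfun (j+1) ⇑(postcomp (B1 E V) ((-(j:ℝ)) • f))) x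
          + iteratedFDeriv ℝ n (Qfun j ⇑(postcomp (B1 E V) (pderivCLM ℝ ((1,0) : ℝ × E) f))) x
          + iteratedFDeriv ℝ n (Qfun j ⇑(postcomp (B2 E V) (fderivCLM ℝ _ _ f))) x := by
      have h12 : ContDiff ℝ (n : ℕ) ((Qfun (j+1) ⇑(postcomp (B1 E V) ((-(j:ℝ)) • f)))
          + (Qfun j ⇑(postcomp (B1 E V) (pderivCLM ℝ ((1,0) : ℝ × E) f)))) := h1.add h2
      unfold QD
      rw [iteratedFDeriv_add_apply h12.contDiffAt h3.contDiffAt,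
        iteratedFDeriv_add_apply h1.contDiffAt h2.contDiffAt]
    rw [hadd]
    calc ‖x‖ ^ k * ‖iteratedFDeriv ℝ n (Qfun (j+1) ⇑(postcomp (B1 E V) ((-(j:ℝ)) • f))) x
          + iteratedFDeriv ℝ n (Qfun j ⇑(postcomp (B1 E V) (pderivCLM ℝ ((1,0) : ℝ × E) f))) x
          + iteratedFDeriv ℝ n (Qfun j ⇑(postcomp (B2 E V) (fderivCLM ℝ _ _ f))) x‖
        ≤ ‖x‖ ^ k * (‖iteratedFDeriv ℝ n (Qfun (j+1) ⇑(postcomp (B1 E V) ((-(j:ℝ)) • f))) x‖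
          + ‖iteratedFDeriv ℝ n (Qfun j ⇑(postcomp (B1 E V) (pderivCLM ℝ ((1,0) : ℝ × E) f))) x‖
          + ‖iteratedFDeriv ℝ n (Qfun j ⇑(postcomp (B2 E V) (fderivCLM ℝ _ _ f))) x‖) :=
          mul_le_mul_of_nonneg_left (norm_add₃_le) (by positivity)
      _ ≤ Ca + Cb + Cc := by
          rw [mul_add, mul_add]
          exact add_le_add (add_le_add (hCa x) (hCb x)) (hCc x)

/-- Division of a Schwartz function vanishing on `t<0` by `t^j`. -/
def Qsch {V : Type uE} [NormedAddCommGroup V] [NormedSpace ℝ V]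
    (f : 𝓢(ℝ × E, V)) (hf : Van ⇑f) (j : ℕ) : 𝓢(ℝ × E, V) where
  toFun := Qfun j ⇑f
  smooth' := contDiff_infty.mpr fun n => Qfun_contDiff n f hf j
  decay' := by
    intro k n
    obtain ⟨C, _, h⟩ := Qfun_decay n f hf j k
    exact ⟨C, h⟩

@[simp] lemma Qsch_apply {V : Type uE} [NormedAddCommGroup V] [NormedSpace ℝ V]
    (f : 𝓢(ℝ × E, V)) (hf : Van ⇑f) (j : ℕ) (p : ℝ × E) :
    Qsch f hf j p = (p.1⁻¹) ^ j • f p := rfl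

lemma van_Qsch {V : Type uE} [NormedAddCommGroup V] [NormedSpace ℝ V]
    (f : 𝓢(ℝ × E, V)) (hf : Van ⇑f) (j : ℕ) : Van ⇑(Qsch f hf j) := by
  intro p hp
  rw [Qsch_apply, hf p hp, smul_zero]

/-- Composition with `√` in the first variable (with junk value `√u = 0` for `u ≤ 0`). -/
def Sfun (f : ℝ × E → V) : ℝ × E → V := fun p => f (Real.sqrt p.1, p.2)

/-- The Schwartz function whose `Sfun` is the derivative of `Sfun f`. -/
def Asch {V : Type uE} [NormedAddCommGroup V] [NormedSpace ℝ V]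
    (f : 𝓢(ℝ × E, V)) (hf : Van ⇑f) : 𝓢(ℝ × E, (ℝ × E) →L[ℝ] V) :=
  (1/2 : ℝ) • postcomp (B1 E V) (Qsch (pderivCLM ℝ ((1,0) : ℝ × E) f) (van_pderiv f hf) 1)
  + postcomp (B2 E V) (fderivCLM ℝ _ _ f)

lemma Asch_apply {V : Type uE} [NormedAddCommGroup V] [NormedSpace ℝ V]
    (f : 𝓢(ℝ × E, V)) (hf : Van ⇑f) (p : ℝ × E) (v : ℝ × E) :
    Asch f hf p v = ((1/2 : ℝ) * p.1⁻¹ * v.1) • (pderivCLM ℝ ((1,0) : ℝ × E) f) p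
        + fderiv ℝ (⇑f) p (0, v.2) := by
  simp only [Asch, SchwartzMap.add_apply, SchwartzMap.smul_apply, postcomp_apply, Qsch_apply,
    pow_one, ContinuousLinearMap.add_apply, ContinuousLinearMap.coe_smul', Pi.smul_apply,
    B1_apply, B2_apply, fderivCLM_apply]
  match_scalars <;> ring

lemma van_Asch {V : Type uE} [NormedAddCommGroup V] [NormedSpace ℝ V]
    (f : 𝓢(ℝ × E, V)) (hf : Van ⇑f) : Van ⇑(Asch f hf) := by
  intro p hp
  refine ContinuousLinearMap.ext fun v => ?_
  rw [Asch_apply f hf p v, van_pderiv f hf p hp, hf.vfderiv p hp]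
  simp

lemma Sfun_Asch_zero {V : Type uE} [NormedAddCommGroup V] [NormedSpace ℝ V]
    (f : 𝓢(ℝ × E, V)) (hf : Van ⇑f) (p : ℝ × E) (hp : p.1 ≤ 0) :
    Sfun ⇑(Asch f hf) p = 0 := by
  have hsq : Real.sqrt p.1 = 0 := Real.sqrt_eq_zero'.mpr hp
  refine ContinuousLinearMap.ext fun v => ?_
  rw [show Sfun ⇑(Asch f hf) p = Asch f hf (Real.sqrt p.1, p.2) from rfl, hsq]
  rw [Asch_apply]
  have h1 : fderiv ℝ (⇑f) ((0:ℝ), p.2) = 0 := hf.fderiv_closure f.smooth' (0, p.2) le_rfl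
  rw [h1]
  simp

lemma Sfun_hasFDerivAt {V : Type uE} [NormedAddCommGroup V] [NormedSpace ℝ V]
    (f : 𝓢(ℝ × E, V)) (hf : Van ⇑f) (p : ℝ × E) :
    HasFDerivAt (Sfun ⇑f) (Sfun ⇑(Asch f hf) p) p := by
  rcases lt_trichotomy p.1 0 with hp | hp | hp
  · -- negative
    have hop : IsOpen {q : ℝ × E | q.1 < 0} := isOpen_lt continuous_fst continuous_const
    have hev : Sfun ⇑f =ᶠ[nhds p] (fun _ => (0:V)) := by
      refine Filter.eventuallyEq_of_mem (hop.mem_nhds hp) (fun q hq => ?_)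
      have hsq : Real.sqrt q.1 = 0 := Real.sqrt_eq_zero'.mpr (le_of_lt (show q.1 < 0 from hq))
      show f (Real.sqrt q.1, q.2) = 0
      rw [hsq]
      exact hf.closure f.continuous (0, q.2) le_rfl
    rw [Sfun_Asch_zero f hf p (le_of_lt hp)]
    exact (hasFDerivAt_const (0:V) p).congr_of_eventuallyEq hev
  · -- zero
    rw [Sfun_Asch_zero f hf p (le_of_eq hp)]
    rw [hasFDerivAt_iff_isLittleO_nhds_zero]
    have hSp : Sfun (⇑f) p = 0 := by
      show f (Real.sqrt p.1, p.2) = 0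
      rw [hp, Real.sqrt_zero]
      exact hf.closure f.continuous (0, p.2) le_rfl
    rw [Asymptotics.isLittleO_iff]
    intro ε hε
    obtain ⟨C, hC0, hC⟩ := flat f hf 4 0
    filter_upwards [Metric.ball_mem_nhds (0 : ℝ × E)
      (show (0:ℝ) < min 1 (ε/(C+1)) by positivity)] with h hh
    rw [mem_ball_zero_iff] at hh
    rw [hSp]
    simp only [ContinuousLinearMap.zero_apply, sub_zero]
    have hεh : (0:ℝ) ≤ ε * ‖h‖ := by positivity
    have hph1 : (p + h).1 = h.1 := by simp [hp]
    have hh1 : ‖h‖ < 1 := lt_of_lt_of_le hh (min_le_left _ _)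
    have hh2 : ‖h‖ < ε/(C+1) := lt_of_lt_of_le hh (min_le_right _ _)
    rcases le_or_gt (p + h).1 0 with ht | ht
    · have hsq : Real.sqrt (p+h).1 = 0 := Real.sqrt_eq_zero'.mpr ht
      rw [show Sfun (⇑f) (p+h) = f (Real.sqrt (p+h).1, (p+h).2) from rfl, hsq,
        hf.closure f.continuous ((0:ℝ), (p+h).2) le_rfl]
      simpa using hεh
    · have ht1 : (p+h).1 ≤ ‖h‖ := by
        rw [hph1] at ht ⊢
        exact le_trans (le_abs_self _) (norm_le_norm_prod_left h.1 h.2)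
      have htle1 : (p+h).1 ≤ 1 := le_trans ht1 (le_of_lt hh1)
      have hs0 : 0 ≤ Real.sqrt (p+h).1 := Real.sqrt_nonneg _
      have hs1 : Real.sqrt (p+h).1 ≤ 1 := by
        rw [show (1:ℝ) = Real.sqrt 1 by rw [Real.sqrt_one]]
        exact Real.sqrt_le_sqrt htle1
      have hc := hC (Real.sqrt (p+h).1) (p+h).2 hs0 hs1
      rw [pow_zero, one_mul] at hc
      have hs4 : (Real.sqrt (p+h).1) ^ 4 = (p+h).1 ^ 2 := by
        rw [show 4 = 2 * 2 by ring, pow_mul, Real.sq_sqrt (le_of_lt ht)]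
      rw [show Sfun (⇑f) (p+h) = f (Real.sqrt (p+h).1, (p+h).2) from rfl]
      calc ‖f (Real.sqrt (p+h).1, (p+h).2)‖ ≤ C * (Real.sqrt (p+h).1) ^ 4 := hc
        _ = C * (p+h).1 ^ 2 := by rw [hs4]
        _ ≤ ε * ‖h‖ := by
            have e1 : (p+h).1 ^ 2 ≤ ‖h‖ * ‖h‖ := by
              rw [sq]
              exact mul_le_mul ht1 ht1 (le_of_lt ht) (norm_nonneg h)
            calc C * (p+h).1 ^ 2 ≤ C * (‖h‖ * ‖h‖) := mul_le_mul_of_nonneg_left e1 hC0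
              _ ≤ C * ((ε/(C+1)) * ‖h‖) :=
                  mul_le_mul_of_nonneg_left
                    (mul_le_mul_of_nonneg_right (le_of_lt hh2) (norm_nonneg h)) hC0
              _ = (C/(C+1)) * ε * ‖h‖ := by ring
              _ ≤ 1 * ε * ‖h‖ := by
                  have hle : C/(C+1) ≤ 1 := by
                    rw [div_le_one (by linarith)]; linarith
                  exact mul_le_mul_of_nonneg_right
                    (mul_le_mul_of_nonneg_right hle (le_of_lt hε)) (norm_nonneg h)
              _ = ε * ‖h‖ := by ring
  · -- positive
    have hne : p.1 ≠ 0 := ne_of_gt hp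
    have hsp : (0:ℝ) < Real.sqrt p.1 := Real.sqrt_pos.mpr hp
    have hs : HasDerivAt Real.sqrt (1 / (2 * Real.sqrt p.1)) p.1 := Real.hasDerivAt_sqrt hne
    have hG1 : HasFDerivAt (fun q : ℝ × E => Real.sqrt q.1)
        ((1 / (2 * Real.sqrt p.1)) • ContinuousLinearMap.fst ℝ ℝ E) p :=
      hs.comp_hasFDerivAt p hasFDerivAt_fst
    have hG : HasFDerivAt (fun q : ℝ × E => ((Real.sqrt q.1, q.2) : ℝ × E))
        (((1 / (2 * Real.sqrt p.1)) • ContinuousLinearMap.fst ℝ ℝ E).prod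
          (ContinuousLinearMap.snd ℝ ℝ E)) p :=
      hG1.prodMk hasFDerivAt_snd
    have hF : HasFDerivAt (⇑f) (fderiv ℝ (⇑f) (Real.sqrt p.1, p.2)) (Real.sqrt p.1, p.2) :=
      f.differentiableAt.hasFDerivAt
    have hcomp := hF.comp p hG
    refine hcomp.congr_fderiv (Eq.symm ?_)
    refine ContinuousLinearMap.ext fun v => ?_
    rw [show Sfun ⇑(Asch f hf) p = Asch f hf (Real.sqrt p.1, p.2) from rfl, Asch_apply]
    rw [ContinuousLinearMap.comp_apply]
    have hval : (((1 / (2 * Real.sqrt p.1)) • ContinuousLinearMap.fst ℝ ℝ E).prod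
        (ContinuousLinearMap.snd ℝ ℝ E)) v = ((1 / (2 * Real.sqrt p.1)) * v.1, v.2) := by
      simp
    rw [hval, fderiv_decomp f (Real.sqrt p.1, p.2) ((1 / (2 * Real.sqrt p.1)) * v.1, v.2)]
    have hsc : (1/2 : ℝ) * (Real.sqrt p.1)⁻¹ * v.1 = 1 / (2 * Real.sqrt p.1) * v.1 := by
      field_simp
    rw [hsc]

lemma Sfun_contDiff (n : ℕ) :
    ∀ {V : Type uE} [NormedAddCommGroup V] [NormedSpace ℝ V],
    ∀ (f : 𝓢(ℝ × E, V)), Van ⇑f → ContDiff ℝ n (Sfun (⇑f)) := by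
  induction n with
  | zero =>
    intro V _ _ f hf
    rw [show ((0:ℕ) : WithTop ℕ∞) = 0 by norm_cast, contDiff_zero]
    exact f.continuous.comp ((Real.continuous_sqrt.comp continuous_fst).prodMk continuous_snd)
  | succ n IH =>
    intro V _ _ f hf
    have hdiff : Differentiable ℝ (Sfun ⇑f) :=
      fun p => (Sfun_hasFDerivAt f hf p).differentiableAt
    have hfd : fderiv ℝ (Sfun ⇑f) = Sfun ⇑(Asch f hf) :=
      funext fun p => (Sfun_hasFDerivAt f hf p).fderiv
    rw [show ((n + 1 : ℕ) : WithTop ℕ∞) = (n : WithTop ℕ∞) + 1 by norm_cast,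
      contDiff_succ_iff_fderiv]
    refine ⟨hdiff, ?_, ?_⟩
    · intro hω
      exact absurd hω (by simp)
    · rw [hfd]
      exact IH (Asch f hf) (van_Asch f hf)

lemma Sfun_norm_est (x : ℝ × E) (hx : 0 < x.1) :
    (1 + ‖x‖) ≤ (1 + ‖((Real.sqrt x.1, x.2) : ℝ × E)‖) ^ 2 := by
  set y : ℝ × E := (Real.sqrt x.1, x.2) with hy
  have h1 : Real.sqrt x.1 ≤ ‖y‖ := by
    have := norm_le_norm_prod_left y.1 y.2
    rw [_root_.abs_of_nonneg (Real.sqrt_nonneg _)] at this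
    simpa [hy] using this
  have h2 : ‖x.2‖ ≤ ‖y‖ := norm_le_norm_prod_right y.1 y.2
  have h3 : x.1 ≤ ‖y‖ ^ 2 := by
    calc x.1 = (Real.sqrt x.1) ^ 2 := (Real.sq_sqrt (le_of_lt hx)).symm
      _ ≤ ‖y‖ ^ 2 := pow_le_pow_left₀ (Real.sqrt_nonneg _) h1 2
  have h4 : ‖x‖ ≤ max (‖y‖^2) ‖y‖ := by
    refine max_le ?_ ?_
    · rw [Real.norm_eq_abs, _root_.abs_of_nonneg (le_of_lt hx)]
      exact le_trans h3 (le_max_left _ _)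
    · exact le_trans h2 (le_max_right _ _)
  have h5 : max (‖y‖^2) ‖y‖ ≤ ‖y‖^2 + ‖y‖ := by
    refine max_le ?_ ?_ <;> nlinarith [norm_nonneg y, sq_nonneg ‖y‖]
  have h6 : ‖x‖ ≤ ‖y‖^2 + ‖y‖ := le_trans h4 h5
  nlinarith [norm_nonneg y]

lemma Sfun_decay (n : ℕ) :
    ∀ {V : Type uE} [NormedAddCommGroup V] [NormedSpace ℝ V],
    ∀ (f : 𝓢(ℝ × E, V)), Van ⇑f → ∀ (k : ℕ),
      ∃ C : ℝ, 0 ≤ C ∧ ∀ x : ℝ × E, ‖x‖ ^ k * ‖iteratedFDeriv ℝ n (Sfun (⇑f)) x‖ ≤ C := by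
  induction n with
  | zero =>
    intro V _ _ f hf k
    set C := 2 ^ (2*k) * (Finset.Iic ((2*k : ℕ),(0:ℕ))).sup
        (schwartzSeminormFamily ℝ (ℝ × E) V) f with hCdef
    have hC0 : (0:ℝ) ≤ C := by positivity
    refine ⟨C, hC0, fun x => ?_⟩
    rw [norm_iteratedFDeriv_zero]
    rcases le_or_gt x.1 0 with hx | hx
    · have hsq : Real.sqrt x.1 = 0 := Real.sqrt_eq_zero'.mpr hx
      rw [show Sfun (⇑f) x = f (Real.sqrt x.1, x.2) from rfl, hsq,
        hf.closure f.continuous (0, x.2) le_rfl]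
      simpa using hC0
    · set y : ℝ × E := (Real.sqrt x.1, x.2) with hy
      have hsem : (1 + ‖y‖) ^ (2*k) * ‖f y‖ ≤ C := by
        have h := one_add_le_sup_seminorm_apply (𝕜 := ℝ) (m := ((2*k : ℕ), (0:ℕ)))
          le_rfl le_rfl f y
        rw [norm_iteratedFDeriv_zero] at h
        exact h
      have hest := Sfun_norm_est x hx
      calc ‖x‖ ^ k * ‖Sfun (⇑f) x‖
          ≤ (1 + ‖x‖) ^ k * ‖f y‖ := by
            refine mul_le_mul_of_nonneg_right ?_ (norm_nonneg _)
            exact pow_le_pow_left₀ (norm_nonneg x) (by linarith [norm_nonneg x]) k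
        _ ≤ ((1 + ‖y‖) ^ 2) ^ k * ‖f y‖ := by
            refine mul_le_mul_of_nonneg_right ?_ (norm_nonneg _)
            exact pow_le_pow_left₀ (by positivity) hest k
        _ = (1 + ‖y‖) ^ (2*k) * ‖f y‖ := by rw [← pow_mul]
        _ ≤ C := hsem
  | succ n IH =>
    intro V _ _ f hf k
    obtain ⟨C, hC0, hC⟩ := IH (Asch f hf) (van_Asch f hf) k
    refine ⟨C, hC0, fun x => ?_⟩
    rw [← norm_iteratedFDeriv_fderiv]
    have hfd : fderiv ℝ (Sfun ⇑f) = Sfun ⇑(Asch f hf) :=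
      funext fun p => (Sfun_hasFDerivAt f hf p).fderiv
    rw [hfd]
    exact hC x

/-- Composition of a flat Schwartz function with `√` in the first variable. -/
def Ssch {V : Type uE} [NormedAddCommGroup V] [NormedSpace ℝ V]
    (f : 𝓢(ℝ × E, V)) (hf : Van ⇑f) : 𝓢(ℝ × E, V) where
  toFun := Sfun ⇑f
  smooth' := contDiff_infty.mpr fun n => Sfun_contDiff n f hf
  decay' := by
    intro k n
    obtain ⟨C, _, h⟩ := Sfun_decay n f hf k
    exact ⟨C, h⟩

@[simp] lemma Ssch_apply {V : Type uE} [NormedAddCommGroup V] [NormedSpace ℝ V]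
    (f : 𝓢(ℝ × E, V)) (hf : Van ⇑f) (p : ℝ × E) :
    Ssch f hf p = f (Real.sqrt p.1, p.2) := rfl

end RstarAux

namespace RstarInt

open RstarAux

abbrev E₂ : Type := EuclideanSpace ℝ (Fin 2)
abbrev D₁ : Type := E₂ × ℝ

lemma integrable_maj : Integrable (fun ξ : E₂ => ((1 + ‖ξ‖) ^ 3)⁻¹) := by
  have h := integrable_one_add_norm (E := E₂) (μ := volume) (r := 3)
    (by rw [finrank_euclideanSpace]; norm_num)
  refine h.congr (Filter.Eventually.of_forall fun ξ => ?_)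
  show ((1:ℝ) + ‖ξ‖) ^ (-(3:ℝ)) = (((1:ℝ) + ‖ξ‖) ^ (3:ℕ))⁻¹
  rw [Real.rpow_neg (by positivity)]
  rw [show (3:ℝ) = ((3:ℕ):ℝ) by norm_num, Real.rpow_natCast]

variable {W : Type} [NormedAddCommGroup W] [NormedSpace ℝ W]

lemma schwartz_bound (k : ℕ) (S : 𝓢(D₁ × E₂, W)) : ∃ C : ℝ, 0 ≤ C ∧ ∀ z : D₁ × E₂,
    ‖z.1‖ ^ k * ‖S z‖ ≤ C / (1 + ‖z.2‖) ^ 3 := by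
  set C := 2 ^ (k+3) * (Finset.Iic ((k+3 : ℕ), (0:ℕ))).sup
      (schwartzSeminormFamily ℝ (D₁ × E₂) W) S with hC
  refine ⟨C, by positivity, fun z => ?_⟩
  have hsem : (1 + ‖z‖) ^ (k+3) * ‖S z‖ ≤ C := by
    have h := one_add_le_sup_seminorm_apply (𝕜 := ℝ) (m := ((k+3 : ℕ), (0:ℕ)))
      le_rfl le_rfl S z
    rw [norm_iteratedFDeriv_zero] at h
    exact h
  rw [le_div_iff₀ (by positivity)]
  have h1 : ‖z.1‖ ≤ 1 + ‖z‖ := by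
    have := le_max_left ‖z.1‖ ‖z.2‖
    have h2 : ‖z.1‖ ≤ ‖z‖ := this
    linarith [norm_nonneg z]
  have h2 : 1 + ‖z.2‖ ≤ 1 + ‖z‖ := by
    have : ‖z.2‖ ≤ ‖z‖ := le_max_right ‖z.1‖ ‖z.2‖
    linarith
  calc ‖z.1‖ ^ k * ‖S z‖ * (1 + ‖z.2‖) ^ 3
      ≤ (1 + ‖z‖) ^ k * ‖S z‖ * (1 + ‖z‖) ^ 3 := by
        refine mul_le_mul ?_ (pow_le_pow_left₀ (by positivity) h2 3) (by positivity) ?_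
        · exact mul_le_mul_of_nonneg_right
            (pow_le_pow_left₀ (norm_nonneg _) h1 k) (norm_nonneg _)
        · positivity
    _ = (1 + ‖z‖) ^ (k+3) * ‖S z‖ := by rw [pow_add]; ring
    _ ≤ C := hsem

def Ifun (S : D₁ × E₂ → W) : D₁ → W := fun x => ∫ ξ : E₂, S (x, ξ)

variable (W) in
def BI : ((D₁ × E₂) →L[ℝ] W) →L[ℝ] (D₁ →L[ℝ] W) :=
  (ContinuousLinearMap.compL ℝ D₁ (D₁ × E₂) W).flip (ContinuousLinearMap.inl ℝ D₁ E₂)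

@[simp] lemma BI_apply (M : (D₁ × E₂) →L[ℝ] W) :
    BI W M = M.comp (ContinuousLinearMap.inl ℝ D₁ E₂) := rfl

def ISD (S : 𝓢(D₁ × E₂, W)) : 𝓢(D₁ × E₂, D₁ →L[ℝ] W) := postcomp (BI W) (fderivCLM ℝ _ _ S)

lemma ISD_apply (S : 𝓢(D₁ × E₂, W)) (z : D₁ × E₂) :
    ISD S z = (fderiv ℝ (⇑S) z).comp (ContinuousLinearMap.inl ℝ D₁ E₂) := rfl

lemma slice_cont (S : 𝓢(D₁ × E₂, W)) (x : D₁) : Continuous (fun ξ : E₂ => S (x, ξ)) :=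
  S.continuous.comp (continuous_const.prodMk continuous_id)

lemma slice_integrable (S : 𝓢(D₁ × E₂, W)) (x : D₁) :
    Integrable (fun ξ : E₂ => S (x, ξ)) := by
  obtain ⟨C, hC0, hC⟩ := schwartz_bound 0 S
  refine (integrable_maj.const_mul C).mono' (slice_cont S x).aestronglyMeasurable
    (Filter.Eventually.of_forall fun ξ => ?_)
  have := hC (x, ξ)
  rw [pow_zero, one_mul] at this
  calc ‖S (x, ξ)‖ ≤ C / (1 + ‖ξ‖) ^ 3 := this
    _ = C * ((1 + ‖ξ‖) ^ 3)⁻¹ := div_eq_mul_inv _ _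

variable [CompleteSpace W]

lemma Ifun_hasFDerivAt (S : 𝓢(D₁ × E₂, W)) (x₀ : D₁) :
    HasFDerivAt (Ifun ⇑S) (Ifun ⇑(ISD S) x₀) x₀ := by
  haveI : SecondCountableTopologyEither E₂ (D₁ →L[ℝ] W) :=
    secondCountableTopologyEither_of_left E₂ (D₁ →L[ℝ] W)
  obtain ⟨C, hC0, hC⟩ := schwartz_bound 0 (ISD S)
  have key := hasFDerivAt_integral_of_dominated_of_fderiv_le
    (F := fun (x : D₁) (ξ : E₂) => S (x, ξ))
    (F' := fun (x : D₁) (ξ : E₂) => ISD S (x, ξ))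
    (bound := fun ξ : E₂ => C / (1 + ‖ξ‖) ^ 3)
    (x₀ := x₀) (s := Metric.ball x₀ 1) (Metric.ball_mem_nhds x₀ one_pos)
    (Filter.Eventually.of_forall fun x => (slice_cont S x).aestronglyMeasurable)
    (slice_integrable S x₀)
    ((slice_cont (ISD S) x₀).aestronglyMeasurable)
    (Filter.Eventually.of_forall fun ξ => fun x _ => by
      have := hC (x, ξ)
      rwa [pow_zero, one_mul] at this)
    (by
      refine (integrable_maj.const_mul C).congr
        (Filter.Eventually.of_forall fun ξ => ?_)
      show C * ((1 + ‖ξ‖) ^ 3)⁻¹ = C / (1 + ‖ξ‖) ^ 3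
      rw [div_eq_mul_inv])
    (Filter.Eventually.of_forall fun ξ => fun x _ => by
      have hinner : HasFDerivAt (fun x : D₁ => ((x, ξ) : D₁ × E₂))
          (ContinuousLinearMap.inl ℝ D₁ E₂) x := by
        have h : HasFDerivAt (fun x : D₁ => ((x, ξ) : D₁ × E₂))
            ((ContinuousLinearMap.id ℝ D₁).prod (0 : D₁ →L[ℝ] E₂)) x :=
          (hasFDerivAt_id x).prodMk (hasFDerivAt_const ξ x)
        have heq : (ContinuousLinearMap.id ℝ D₁).prod (0 : D₁ →L[ℝ] E₂)
            = ContinuousLinearMap.inl ℝ D₁ E₂ := by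
          refine ContinuousLinearMap.ext fun v => ?_
          simp
        rwa [heq] at h
      have hcomp := (S.differentiableAt.hasFDerivAt).comp x hinner
      exact hcomp)
  exact key

lemma Ifun_contDiff (n : ℕ) :
    ∀ {W : Type} [NormedAddCommGroup W] [NormedSpace ℝ W] [CompleteSpace W],
    ∀ (S : 𝓢(D₁ × E₂, W)), ContDiff ℝ n (Ifun (⇑S)) := by
  induction n with
  | zero =>
    intro W _ _ _ S
    rw [show ((0:ℕ) : WithTop ℕ∞) = 0 by norm_cast, contDiff_zero]
    exact continuous_iff_continuousAt.mpr fun x =>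
      (Ifun_hasFDerivAt S x).differentiableAt.continuousAt
  | succ n IH =>
    intro W _ _ _ S
    have hdiff : Differentiable ℝ (Ifun ⇑S) :=
      fun x => (Ifun_hasFDerivAt S x).differentiableAt
    have hfd : fderiv ℝ (Ifun ⇑S) = Ifun ⇑(ISD S) :=
      funext fun x => (Ifun_hasFDerivAt S x).fderiv
    rw [show ((n + 1 : ℕ) : WithTop ℕ∞) = (n : WithTop ℕ∞) + 1 by norm_cast,
      contDiff_succ_iff_fderiv]
    refine ⟨hdiff, fun hω => absurd hω (by simp), ?_⟩
    rw [hfd]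
    exact IH (ISD S)

lemma Ifun_decay (n : ℕ) :
    ∀ {W : Type} [NormedAddCommGroup W] [NormedSpace ℝ W] [CompleteSpace W],
    ∀ (S : 𝓢(D₁ × E₂, W)) (k : ℕ),
      ∃ C : ℝ, 0 ≤ C ∧ ∀ x : D₁, ‖x‖ ^ k * ‖iteratedFDeriv ℝ n (Ifun (⇑S)) x‖ ≤ C := by
  induction n with
  | zero =>
    intro W _ _ _ S k
    obtain ⟨C, hC0, hC⟩ := schwartz_bound k S
    refine ⟨C * ∫ ξ : E₂, ((1 + ‖ξ‖) ^ 3)⁻¹, by positivity, fun x => ?_⟩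
    rw [norm_iteratedFDeriv_zero]
    have hmaj : ∀ ξ : E₂, ‖x‖ ^ k * ‖S (x, ξ)‖ ≤ C * ((1 + ‖ξ‖) ^ 3)⁻¹ := fun ξ => by
      have := hC (x, ξ)
      rwa [div_eq_mul_inv] at this
    have hint1 : Integrable (fun ξ : E₂ => ‖x‖ ^ k * ‖S (x, ξ)‖) := by
      refine (integrable_maj.const_mul C).mono'
        ((continuous_const.mul (slice_cont S x).norm).aestronglyMeasurable)
        (Filter.Eventually.of_forall fun ξ => ?_)
      rw [Real.norm_eq_abs, _root_.abs_of_nonneg (by positivity)]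
      exact hmaj ξ
    calc ‖x‖ ^ k * ‖Ifun (⇑S) x‖
        ≤ ‖x‖ ^ k * ∫ ξ : E₂, ‖S (x, ξ)‖ := by
          refine mul_le_mul_of_nonneg_left ?_ (by positivity)
          exact norm_integral_le_integral_norm _
      _ = ∫ ξ : E₂, ‖x‖ ^ k * ‖S (x, ξ)‖ := (integral_const_mul _ _).symm
      _ ≤ ∫ ξ : E₂, C * ((1 + ‖ξ‖) ^ 3)⁻¹ := by
          refine integral_mono hint1 (integrable_maj.const_mul C)
            (fun ξ => hmaj ξ)
      _ = C * ∫ ξ : E₂, ((1 + ‖ξ‖) ^ 3)⁻¹ := integral_const_mul _ _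
  | succ n IH =>
    intro W _ _ _ S k
    obtain ⟨C, hC0, hC⟩ := IH (ISD S) k
    refine ⟨C, hC0, fun x => ?_⟩
    rw [← norm_iteratedFDeriv_fderiv]
    have hfd : fderiv ℝ (Ifun ⇑S) = Ifun ⇑(ISD S) :=
      funext fun y => (Ifun_hasFDerivAt S y).fderiv
    rw [hfd]
    exact hC x

/-- Integrating a Schwartz function over the second factor. -/
def Isch (S : 𝓢(D₁ × E₂, W)) : 𝓢(D₁, W) where
  toFun := Ifun ⇑S
  smooth' := contDiff_infty.mpr fun n => Ifun_contDiff n S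
  decay' := by
    intro k n
    obtain ⟨C, _, h⟩ := Ifun_decay n S k
    exact ⟨C, h⟩

@[simp] lemma Isch_apply (S : 𝓢(D₁ × E₂, W)) (x : D₁) :
    Isch S x = ∫ ξ : E₂, S (x, ξ) := rfl

end RstarInt

namespace RstarFinal

open RstarAux RstarInt SchwartzMap

lemma ht_add {D F : Type*} [NormedAddCommGroup D] [NormedSpace ℝ D]
    [NormedAddCommGroup F] [NormedSpace ℝ F] {f g : D → F}
    (hf : f.HasTemperateGrowth) (hg : g.HasTemperateGrowth) :
    Function.HasTemperateGrowth (fun x => f x + g x) := by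
  refine ⟨hf.1.add hg.1, fun n => ?_⟩
  obtain ⟨k1, C1, hC1, h1⟩ := hf.norm_iteratedFDeriv_le_uniform n
  obtain ⟨k2, C2, hC2, h2⟩ := hg.norm_iteratedFDeriv_le_uniform n
  refine ⟨max k1 k2, C1 + C2, fun x => ?_⟩
  have hx1 : (1:ℝ) ≤ 1 + ‖x‖ := by linarith [norm_nonneg x]
  have hn : ((n : ℕ) : WithTop ℕ∞) ≤ ∞ := by exact_mod_cast le_top
  have hadd : iteratedFDeriv ℝ n (fun x => f x + g x) x
      = iteratedFDeriv ℝ n f x + iteratedFDeriv ℝ n g x :=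
    iteratedFDeriv_add_apply (hf.1.of_le hn).contDiffAt (hg.1.of_le hn).contDiffAt
  calc ‖iteratedFDeriv ℝ n (fun x => f x + g x) x‖
      ≤ ‖iteratedFDeriv ℝ n f x‖ + ‖iteratedFDeriv ℝ n g x‖ := by
        rw [hadd]; exact norm_add_le _ _
    _ ≤ C1 * (1 + ‖x‖) ^ k1 + C2 * (1 + ‖x‖) ^ k2 :=
        add_le_add (h1 n le_rfl x) (h2 n le_rfl x)
    _ ≤ C1 * (1 + ‖x‖) ^ max k1 k2 + C2 * (1 + ‖x‖) ^ max k1 k2 := by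
        refine add_le_add ?_ ?_ <;>
          exact mul_le_mul_of_nonneg_left
            (pow_le_pow_right₀ hx1 (by simp [le_max_left, le_max_right])) (by assumption)
    _ = (C1 + C2) * (1 + ‖x‖) ^ max k1 k2 := by ring

lemma ht_mul {D : Type*} [NormedAddCommGroup D] [NormedSpace ℝ D] {f g : D → ℝ}
    (hf : f.HasTemperateGrowth) (hg : g.HasTemperateGrowth) :
    Function.HasTemperateGrowth (fun x => f x * g x) := by
  refine ⟨hf.1.mul hg.1, fun n => ?_⟩
  obtain ⟨k1, C1, hC1, h1⟩ := hf.norm_iteratedFDeriv_le_uniform n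
  obtain ⟨k2, C2, hC2, h2⟩ := hg.norm_iteratedFDeriv_le_uniform n
  refine ⟨k1 + k2, 2 ^ n * (C1 * C2), fun x => ?_⟩
  have hx1 : (1:ℝ) ≤ 1 + ‖x‖ := by linarith [norm_nonneg x]
  have hmul := norm_iteratedFDeriv_mul_le (𝕜 := ℝ) (A := ℝ) (N := ∞) (n := n)
    hf.1 hg.1 x (by exact_mod_cast le_top)
  refine le_trans hmul ?_
  have hterm : ∀ i ∈ Finset.range (n+1),
      (n.choose i : ℝ) * ‖iteratedFDeriv ℝ i f x‖ * ‖iteratedFDeriv ℝ (n - i) g x‖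
        ≤ (n.choose i : ℝ) * (C1 * C2 * (1 + ‖x‖) ^ (k1 + k2)) := by
    intro i hi
    rw [Finset.mem_range] at hi
    have hia : i ≤ n := Nat.lt_succ_iff.mp hi
    have e1 := h1 i hia x
    have e2 := h2 (n - i) (Nat.sub_le _ _) x
    calc (n.choose i : ℝ) * ‖iteratedFDeriv ℝ i f x‖ * ‖iteratedFDeriv ℝ (n - i) g x‖
        ≤ (n.choose i : ℝ) * (C1 * (1 + ‖x‖) ^ k1) * (C2 * (1 + ‖x‖) ^ k2) := by
          refine mul_le_mul ?_ e2 (norm_nonneg _) (by positivity)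
          exact mul_le_mul_of_nonneg_left e1 (by positivity)
      _ = (n.choose i : ℝ) * (C1 * C2 * (1 + ‖x‖) ^ (k1 + k2)) := by
          rw [pow_add]; ring
  refine le_trans (Finset.sum_le_sum hterm) ?_
  rw [← Finset.sum_mul]
  have hsum : (∑ i ∈ Finset.range (n+1), (n.choose i : ℝ)) = 2 ^ n := by
    norm_cast
    exact Nat.sum_range_choose n
  rw [hsum]
  ring_nf
  exact le_refl _

lemma ht_postcomp {D F G : Type*} [NormedAddCommGroup D] [NormedSpace ℝ D]
    [NormedAddCommGroup F] [NormedSpace ℝ F] [NormedAddCommGroup G] [NormedSpace ℝ G]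
    (u : F →L[ℝ] G) {f : D → F} (hf : f.HasTemperateGrowth) :
    Function.HasTemperateGrowth (fun x => u (f x)) := by
  refine ⟨u.contDiff.comp hf.1, fun n => ?_⟩
  obtain ⟨k, C, hC, h⟩ := hf.norm_iteratedFDeriv_le_uniform n
  refine ⟨k, ‖u‖ * C, fun x => ?_⟩
  have hcomp : iteratedFDeriv ℝ n (fun x => u (f x)) x
      = u.compContinuousMultilinearMap (iteratedFDeriv ℝ n f x) :=
    u.iteratedFDeriv_comp_left hf.1.contDiffAt (by exact_mod_cast le_top)
  rw [hcomp]
  calc ‖u.compContinuousMultilinearMap (iteratedFDeriv ℝ n f x)‖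
      ≤ ‖u‖ * ‖iteratedFDeriv ℝ n f x‖ := u.norm_compContinuousMultilinearMap_le _
    _ ≤ ‖u‖ * (C * (1 + ‖x‖) ^ k) :=
        mul_le_mul_of_nonneg_left (h n le_rfl x) (norm_nonneg u)
    _ = ‖u‖ * C * (1 + ‖x‖) ^ k := by ring

/-- linear part: `y ↦ y.1.1 - y.2`. -/
def cA : (D₁ × E₂) →L[ℝ] E₂ :=
  (ContinuousLinearMap.fst ℝ E₂ ℝ).comp (ContinuousLinearMap.fst ℝ D₁ E₂)
    - ContinuousLinearMap.snd ℝ D₁ E₂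

/-- linear part: `y ↦ y.1.2`. -/
def cT : (D₁ × E₂) →L[ℝ] ℝ :=
  (ContinuousLinearMap.snd ℝ E₂ ℝ).comp (ContinuousLinearMap.fst ℝ D₁ E₂)

def ci (i : Fin 2) : (D₁ × E₂) →L[ℝ] ℝ :=
  (PiLp.proj 2 (fun _ : Fin 2 => ℝ) i).comp cA

/-- The quadratic polynomial `y ↦ ‖y.1.1 - y.2‖² + y.1.2²`. -/
def qfun : D₁ × E₂ → ℝ :=
  fun y => (ci 0 y * ci 0 y + ci 1 y * ci 1 y) + cT y * cT y

lemma q_eq (x : D₁) (ξ : E₂) : qfun (x, ξ) = ‖x.1 - ξ‖ ^ 2 + x.2 ^ 2 := by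
  have hnorm : ‖x.1 - ξ‖ ^ 2 = ∑ i : Fin 2, ‖(x.1 - ξ) i‖ ^ 2 := by
    rw [EuclideanSpace.norm_eq, Real.sq_sqrt]
    positivity
  rw [hnorm, Fin.sum_univ_two]
  have h0 : ci 0 (x, ξ) = (x.1 - ξ) 0 := rfl
  have h1 : ci 1 (x, ξ) = (x.1 - ξ) 1 := rfl
  have h2 : cT (x, ξ) = x.2 := rfl
  simp only [qfun, h0, h1, h2, Real.norm_eq_abs, _root_.sq_abs]
  ring

lemma ht_q : qfun.HasTemperateGrowth := by
  refine ht_add (ht_add ?_ ?_) ?_ <;>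
    exact ht_mul (ContinuousLinearMap.hasTemperateGrowth _)
      (ContinuousLinearMap.hasTemperateGrowth _)

/-- The map `(x, ξ) ↦ (‖x.1 - ξ‖² + x.2², ξ)`. -/
def gfun : D₁ × E₂ → ℝ × E₂ := fun y => (qfun y, y.2)

lemma ht_g : gfun.HasTemperateGrowth := by
  have h1 : Function.HasTemperateGrowth
      (fun y : D₁ × E₂ => (ContinuousLinearMap.inl ℝ ℝ E₂) (qfun y)) :=
    ht_postcomp _ ht_q
  have h2 := ((ContinuousLinearMap.inr ℝ ℝ E₂).comp
    (ContinuousLinearMap.snd ℝ D₁ E₂)).hasTemperateGrowth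
  have h3 := ht_add h1 h2
  have heq : (fun y : D₁ × E₂ => (ContinuousLinearMap.inl ℝ ℝ E₂) (qfun y)
      + ((ContinuousLinearMap.inr ℝ ℝ E₂).comp (ContinuousLinearMap.snd ℝ D₁ E₂)) y) = gfun := by
    funext y
    refine Prod.ext ?_ ?_ <;> simp [gfun]
  rwa [heq] at h3

lemma q_nonneg (y : D₁ × E₂) : 0 ≤ qfun y := by
  have := q_eq y.1 y.2
  rw [Prod.mk.eta] at this
  rw [this]
  positivity

lemma hg_upper : ∃ (k : ℕ) (C : ℝ), ∀ y : D₁ × E₂, ‖y‖ ≤ C * (1 + ‖gfun y‖) ^ k := by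
  refine ⟨1, 2, fun y => ?_⟩
  rw [pow_one]
  have hq := q_eq y.1 y.2
  rw [Prod.mk.eta] at hq
  set q := qfun y with hqdef
  have hq0 : 0 ≤ q := q_nonneg y
  have hqle : q ≤ ‖gfun y‖ := by
    calc q = |q| := (_root_.abs_of_nonneg hq0).symm
      _ ≤ max |q| ‖y.2‖ := le_max_left _ _
      _ = ‖gfun y‖ := rfl
  have hy2 : ‖y.2‖ ≤ ‖gfun y‖ := le_max_right _ _
  have ha : ‖y.1.1 - y.2‖ ≤ 1 + q := by
    nlinarith [norm_nonneg (y.1.1 - y.2), sq_nonneg (‖y.1.1 - y.2‖ - 1), sq_nonneg y.1.2,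
      hq.symm]
  have hb : |y.1.2| ≤ 1 + q := by
    nlinarith [sq_nonneg (|y.1.2| - 1), abs_nonneg y.1.2, _root_.sq_abs y.1.2,
      sq_nonneg ‖y.1.1 - y.2‖]
  have h11 : ‖y.1.1‖ ≤ 1 + q + ‖y.2‖ := by
    calc ‖y.1.1‖ = ‖(y.1.1 - y.2) + y.2‖ := by rw [sub_add_cancel]
      _ ≤ ‖y.1.1 - y.2‖ + ‖y.2‖ := norm_add_le _ _
      _ ≤ 1 + q + ‖y.2‖ := by linarith
  have hnorm : ‖y‖ = max (max ‖y.1.1‖ |y.1.2|) ‖y.2‖ := rfl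
  rw [hnorm]
  have hg0 : 0 ≤ ‖gfun y‖ := norm_nonneg _
  refine max_le (max_le ?_ ?_) ?_
  · calc ‖y.1.1‖ ≤ 1 + q + ‖y.2‖ := h11
      _ ≤ 1 + ‖gfun y‖ + ‖gfun y‖ := by linarith
      _ ≤ 2 * (1 + ‖gfun y‖) := by linarith
  · calc |y.1.2| ≤ 1 + q := hb
      _ ≤ 1 + ‖gfun y‖ := by linarith
      _ ≤ 2 * (1 + ‖gfun y‖) := by linarith
  · linarith

end RstarFinal
end

theorem stmt8 (φ : SchwartzMap (ℝ × EuclideanSpace ℝ (Fin 2)) ℂ)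
    (hφ : ∀ (t : ℝ) (ξ : EuclideanSpace ℝ (Fin 2)), t < 0 → φ (t, ξ) = 0) :
    ∃ ψ : SchwartzMap (EuclideanSpace ℝ (Fin 2) × ℝ) ℂ,
      ∀ x : EuclideanSpace ℝ (Fin 2) × ℝ, ψ x = Rstar (⇑φ) x := by
  have hφ' : RstarAux.Van ⇑φ := by
    intro p hp
    have h := hφ p.1 p.2 hp
    rwa [Prod.mk.eta] at h
  have hvan₁ : RstarAux.Van ⇑(RstarAux.Qsch φ hφ' 1) := RstarAux.van_Qsch φ hφ' 1
  set H := RstarAux.Ssch (RstarAux.Qsch φ hφ' 1) hvan₁ with hH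
  set K := SchwartzMap.compCLM ℝ RstarFinal.ht_g RstarFinal.hg_upper H with hK
  refine ⟨(1/(4*Real.pi) : ℝ) • RstarInt.Isch K, fun x => ?_⟩
  rw [SchwartzMap.smul_apply, RstarInt.Isch_apply, Rstar]
  rw [Complex.real_smul]
  congr 1
  apply MeasureTheory.integral_congr_ae
  refine Filter.Eventually.of_forall fun ξ => ?_
  have hKval : K (x, ξ) = H (RstarFinal.qfun (x, ξ), ξ) := rfl
  have hqv : RstarFinal.qfun (x, ξ) = ‖x.1 - ξ‖ ^ 2 + x.2 ^ 2 := RstarFinal.q_eq x ξ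
  show K (x, ξ) = φ (Real.sqrt (‖x.1 - ξ‖ ^ 2 + x.2 ^ 2), ξ) /
      ((Real.sqrt (‖x.1 - ξ‖ ^ 2 + x.2 ^ 2) : ℝ) : ℂ)
  rw [hKval, hqv]
  have hHval : H (‖x.1 - ξ‖ ^ 2 + x.2 ^ 2, ξ)
      = ((Real.sqrt (‖x.1 - ξ‖ ^ 2 + x.2 ^ 2))⁻¹) ^ 1
          • φ (Real.sqrt (‖x.1 - ξ‖ ^ 2 + x.2 ^ 2), ξ) := rfl
  rw [hHval, pow_one]
  rw [div_eq_inv_mul, ← Complex.ofReal_inv, ← Complex.real_smul]
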